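/- Let N, d ≥ 1, B > 0, let W ∈ ℝ^{N×N} be doubly stochastic with ‖W − (1/N)𝟙𝟙ᵀ‖_* ≤ 1, let (ε_t)_{t∈ℕ} be a nonincreasing sequence of nonnegative step sizes, and let (Θ^t)_{t∈ℕ} in ℝ^{N×d} satisfy Θ^{t+1} = WΘ^t + ε_t G^t for every t, where each G^t ∈ ℝ^{N×d} has rows g_i^t with ‖g_i^t‖ ≤ B(‖θ_i^t‖ + 1) (θ_i^t being the rows of Θ^t). Write θ̄^t for the row average and S^t for the consensus error of Θ^t. Let τ ≥ 1 and k ≥ τ be natural numbers such that 6NBτ ε_{k−τ} ≤ 1. Then ‖θ̄^k − θ̄^{k−τ}‖ ≤ 3 ε_{k−τ} B τ (‖θ̄^k‖ + √(S^{k−τ}) + 1), and consequently ‖θ̄^k − θ̄^{k−τ}‖ ≤ (1/(2N)) (‖θ̄^k‖ + √(S^{k−τ}) + 1). -/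

import Mathlib

/-- Euclidean norm of a vector in `ℝ^d` given as a plain function. -/
noncomputable def enorm {d : ℕ} (v : Fin d → ℝ) : ℝ :=
  ‖(WithLp.equiv 2 (Fin d → ℝ)).symm v‖

/-- Spectral (ℓ₂ operator) norm of a square matrix. -/
noncomputable def specNorm {N : ℕ} (M : Matrix (Fin N) (Fin N) ℝ) : ℝ :=
  ‖Matrix.toEuclideanCLM (𝕜 := ℝ) M‖

/-- A matrix is doubly stochastic: nonnegative entries, all row sums and column sums equal 1. -/
def DoublyStochastic {N : ℕ} (W : Matrix (Fin N) (Fin N) ℝ) : Prop :=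
  (∀ i j, 0 ≤ W i j) ∧ (∀ i, ∑ j, W i j = 1) ∧ (∀ j, ∑ i, W i j = 1)

/-- Row average of a matrix `Θ ∈ ℝ^{N×d}`: `θ̄ = (1/N) Θᵀ 𝟙`. -/
noncomputable def rowAvg {N d : ℕ} (Θ : Matrix (Fin N) (Fin d) ℝ) : Fin d → ℝ :=
  fun j => (N : ℝ)⁻¹ * ∑ i, Θ i j

/-- Consensus error `S = ∑ᵢ ‖θᵢ − θ̄‖²` of a matrix of stacked iterates. -/
noncomputable def consErr {N d : ℕ} (Θ : Matrix (Fin N) (Fin d) ℝ) : ℝ :=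
  ∑ i, (_root_.enorm (fun j => Θ i j - rowAvg Θ j)) ^ 2

lemma enorm_eq {d : ℕ} (v : Fin d → ℝ) :
    _root_.enorm v = ‖(WithLp.linearEquiv 2 ℝ (Fin d → ℝ)).symm v‖ := rfl

lemma enorm_nonneg' {d : ℕ} (v : Fin d → ℝ) : 0 ≤ _root_.enorm v := norm_nonneg _

lemma enorm_add_le' {d : ℕ} (u v : Fin d → ℝ) :
    _root_.enorm (fun j => u j + v j) ≤ _root_.enorm u + _root_.enorm v := by
  have h : (fun j => u j + v j) = u + v := rfl
  rw [h, enorm_eq, map_add]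
  exact (norm_add_le _ _).trans (by rw [enorm_eq, enorm_eq])

lemma enorm_smul' {d : ℕ} (c : ℝ) (v : Fin d → ℝ) :
    _root_.enorm (fun j => c * v j) = |c| * _root_.enorm v := by
  have h : (fun j => c * v j) = c • v := rfl
  rw [h, enorm_eq, map_smul, norm_smul, Real.norm_eq_abs, enorm_eq]

lemma enorm_sum_le' {d : ℕ} {ι : Type*} (s : Finset ι) (f : ι → Fin d → ℝ) :
    _root_.enorm (fun j => ∑ i ∈ s, f i j) ≤ ∑ i ∈ s, _root_.enorm (f i) := by
  have h : (fun j => ∑ i ∈ s, f i j) = ∑ i ∈ s, f i := by funext j; simp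
  rw [h, enorm_eq, map_sum]
  exact (norm_sum_le _ _).trans (le_of_eq (by simp [enorm_eq]))

lemma enorm_sub_comm {d : ℕ} (u v : Fin d → ℝ) :
    _root_.enorm (fun j => u j - v j) = _root_.enorm (fun j => v j - u j) := by
  have h : (fun j => u j - v j) = fun j => (-1 : ℝ) * (v j - u j) := by funext j; ring
  rw [h, enorm_smul']; simp

lemma enorm_triangle_sub {d : ℕ} (u v : Fin d → ℝ) :
    _root_.enorm u ≤ _root_.enorm v + _root_.enorm (fun j => u j - v j) := by
  have h : _root_.enorm (fun j => v j + (u j - v j)) ≤ _root_.enorm v + _root_.enorm (fun j => u j - v j) :=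
    enorm_add_le' v _
  simpa using h

lemma pow_bound_aux (a : ℝ) (ha : 0 ≤ a) :
    ∀ m : ℕ, a * m ≤ 1/6 → (1+a)^m * (1 - a*m) ≤ 1 := by
  intro m
  induction m with
  | zero => simp
  | succ m ih =>
    intro h
    have hm : (0:ℝ) ≤ m := Nat.cast_nonneg m
    have hcast : ((m+1 : ℕ) : ℝ) = (m : ℝ) + 1 := by push_cast; ring
    rw [hcast] at h ⊢
    have ham : a * m ≤ 1/6 := by nlinarith
    have ih' := ih ham
    have hpos : (0:ℝ) ≤ (1+a)^m := by positivity
    have key : (1+a) * (1 - a*((m:ℝ)+1)) ≤ 1 - a*m := by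
      nlinarith [mul_nonneg (mul_nonneg ha ha) hm, sq_nonneg a]
    calc (1+a)^(m+1) * (1 - a*((m:ℝ)+1))
        = (1+a)^m * ((1+a)*(1-a*((m:ℝ)+1))) := by ring
      _ ≤ (1+a)^m * (1 - a*m) := mul_le_mul_of_nonneg_left key hpos
      _ ≤ 1 := ih'

lemma boot_aux (c D X : ℝ) (hD0 : 0 ≤ D) (hX0 : 0 ≤ X) (hc0 : 0 ≤ c) (hc : c ≤ 1/6)
    (h : D ≤ (6/5)*c*(X+D)) : D ≤ 3*c*X := by
  nlinarith [mul_nonneg hc0 hX0, mul_nonneg (by linarith : (0:ℝ) ≤ 1/6 - c) hD0]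

/-- Drift of the average iterate over a window of `τ` steps:
`‖θ̄^k − θ̄^{k−τ}‖ ≤ 3 ε_{k−τ} B τ (‖θ̄^k‖ + √(S^{k−τ}) + 1)` and consequently
`‖θ̄^k − θ̄^{k−τ}‖ ≤ (1/(2N)) (‖θ̄^k‖ + √(S^{k−τ}) + 1)`. -/
theorem average_drift_window (N d : ℕ) (hN : 1 ≤ N) (hd : 1 ≤ d)
    (B : ℝ) (hB : 0 < B)
    (W : Matrix (Fin N) (Fin N) ℝ) (hW : DoublyStochastic W)
    (hWspec : specNorm (W - (N : ℝ)⁻¹ •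
      Matrix.of (fun (_ : Fin N) (_ : Fin N) => (1 : ℝ))) ≤ 1)
    (ε : ℕ → ℝ) (hεnonneg : ∀ t, 0 ≤ ε t) (hεmono : ∀ s t, s ≤ t → ε t ≤ ε s)
    (Θ G : ℕ → Matrix (Fin N) (Fin d) ℝ)
    (hupdate : ∀ t, Θ (t + 1) = W * Θ t + ε t • G t)
    (hG : ∀ t i, _root_.enorm (fun j => G t i j) ≤ B * (_root_.enorm (fun j => Θ t i j) + 1))
    (τ k : ℕ) (hτ : 1 ≤ τ) (hk : τ ≤ k)
    (hstep : 6 * N * B * τ * ε (k - τ) ≤ 1) :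
    _root_.enorm (fun j => rowAvg (Θ k) j - rowAvg (Θ (k - τ)) j)
        ≤ 3 * ε (k - τ) * B * τ *
            (_root_.enorm (rowAvg (Θ k)) + Real.sqrt (consErr (Θ (k - τ))) + 1)
      ∧ _root_.enorm (fun j => rowAvg (Θ k) j - rowAvg (Θ (k - τ)) j)
        ≤ (1 / (2 * N)) *
            (_root_.enorm (rowAvg (Θ k)) + Real.sqrt (consErr (Θ (k - τ))) + 1) := by
  obtain ⟨hWpos, hWrow, hWcol⟩ := hW
  set r := k - τ with hrdef
  have hkr : r + τ = k := Nat.sub_add_cancel hk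
  have hNpos : (0:ℝ) < N := by exact_mod_cast Nat.lt_of_lt_of_le Nat.zero_lt_one hN
  have hN1 : (1:ℝ) ≤ N := by exact_mod_cast hN
  set P : ℕ → ℝ := fun t => ∑ i, _root_.enorm (fun j => Θ t i j) with hPdef
  have hPnn : ∀ t, 0 ≤ P t := fun t => Finset.sum_nonneg fun i _ => enorm_nonneg' _
  set a : ℝ := ε r * B with hadef
  have ha : 0 ≤ a := mul_nonneg (hεnonneg r) hB.le
  -- entrywise update
  have hentry : ∀ t i j, Θ (t+1) i j = (∑ l, W i l * Θ t l j) + ε t * G t i j := by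
    intro t i j
    rw [hupdate t]
    simp [Matrix.add_apply, Matrix.mul_apply, Matrix.smul_apply]
  -- row norm recursion
  have hrow : ∀ t i, _root_.enorm (fun j => Θ (t+1) i j)
      ≤ (∑ l, W i l * _root_.enorm (fun j => Θ t l j)) + ε t * (B * (_root_.enorm (fun j => Θ t i j) + 1)) := by
    intro t i
    have h1 : _root_.enorm (fun j => Θ (t+1) i j)
        ≤ _root_.enorm (fun j => ∑ l, W i l * Θ t l j) + _root_.enorm (fun j => ε t * G t i j) := by
      have := enorm_add_le' (fun j => ∑ l, W i l * Θ t l j) (fun j => ε t * G t i j)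
      simpa [hentry t i] using this
    have h2 : _root_.enorm (fun j => ∑ l, W i l * Θ t l j)
        ≤ ∑ l, W i l * _root_.enorm (fun j => Θ t l j) := by
      refine (enorm_sum_le' Finset.univ (fun l => fun j => W i l * Θ t l j)).trans ?_
      refine Finset.sum_le_sum fun l _ => ?_
      rw [enorm_smul', abs_of_nonneg (hWpos i l)]
    have h3 : _root_.enorm (fun j => ε t * G t i j) ≤ ε t * (B * (_root_.enorm (fun j => Θ t i j) + 1)) := by
      rw [enorm_smul', abs_of_nonneg (hεnonneg t)]
      exact mul_le_mul_of_nonneg_left (hG t i) (hεnonneg t)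
    linarith
  -- P recursion
  have hPstep : ∀ t, P (t+1) ≤ P t + ε t * B * (P t + N) := by
    intro t
    have h1 : P (t+1) ≤ ∑ i, ((∑ l, W i l * _root_.enorm (fun j => Θ t l j))
        + ε t * (B * (_root_.enorm (fun j => Θ t i j) + 1))) :=
      Finset.sum_le_sum fun i _ => hrow t i
    rw [Finset.sum_add_distrib] at h1
    have h2 : ∑ i, ∑ l, W i l * _root_.enorm (fun j => Θ t l j) = P t := by
      rw [Finset.sum_comm]
      simp only [← Finset.sum_mul]
      simp [hWcol, hPdef]
    have hinner : ∑ i, (B * (_root_.enorm (fun j => Θ t i j) + 1)) = B * (P t + (N:ℝ)) := by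
      rw [← Finset.mul_sum, Finset.sum_add_distrib]
      simp [hPdef]
    have h3 : ∑ i, ε t * (B * (_root_.enorm (fun j => Θ t i j) + 1)) = ε t * B * (P t + N) := by
      rw [← Finset.mul_sum, hinner]; ring
    rw [h2, h3] at h1
    exact h1
  -- growth bound
  have hgrow : ∀ m, P (r+m) + N ≤ (1+a)^m * (P r + N) := by
    intro m
    induction m with
    | zero => simp
    | succ m ih =>
      have hε : ε (r+m) ≤ ε r := hεmono r (r+m) (Nat.le_add_right _ _)
      have hPNnn : 0 ≤ P (r+m) + (N:ℝ) := by linarith [hPnn (r+m), hNpos]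
      have h1 : P (r+m+1) + N ≤ (1+a) * (P (r+m) + N) := by
        have := hPstep (r+m)
        have hmul : ε (r+m) * B * (P (r+m) + N) ≤ a * (P (r+m) + N) :=
          mul_le_mul_of_nonneg_right (mul_le_mul_of_nonneg_right hε hB.le) hPNnn
        nlinarith
      calc P (r+(m+1)) + N = P (r+m+1) + N := by ring_nf
        _ ≤ (1+a) * (P (r+m) + N) := h1
        _ ≤ (1+a) * ((1+a)^m * (P r + N)) :=
            mul_le_mul_of_nonneg_left ih (by linarith)
        _ = (1+a)^(m+1) * (P r + N) := by ring
  -- row average step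
  have havg : ∀ t j, rowAvg (Θ (t+1)) j = rowAvg (Θ t) j + ε t * ((N:ℝ)⁻¹ * ∑ i, G t i j) := by
    intro t j
    simp only [rowAvg]
    have h1 : ∑ i, Θ (t+1) i j = (∑ i, Θ t i j) + ε t * ∑ i, G t i j := by
      simp only [hentry t]
      rw [Finset.sum_add_distrib, Finset.sum_comm]
      simp only [← Finset.sum_mul]
      simp [hWcol, Finset.mul_sum]
    rw [h1]; ring
  -- telescoping
  have htel : ∀ m j, rowAvg (Θ (r+m)) j - rowAvg (Θ r) j
      = ∑ s ∈ Finset.range m, ε (r+s) * ((N:ℝ)⁻¹ * ∑ i, G (r+s) i j) := by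
    intro m j
    induction m with
    | zero => simp
    | succ m ih =>
      rw [Finset.sum_range_succ, ← ih, ← Nat.add_assoc, havg (r+m) j]
      ring
  -- abbreviations
  have hconsnn : 0 ≤ consErr (Θ r) := Finset.sum_nonneg fun i _ => sq_nonneg _
  set S : ℝ := Real.sqrt (consErr (Θ r)) with hSdef
  have hSnn : 0 ≤ S := Real.sqrt_nonneg _
  set X : ℝ := _root_.enorm (rowAvg (Θ k)) + S + 1 with hXdef
  set D : ℝ := _root_.enorm (fun j => rowAvg (Θ k) j - rowAvg (Θ r) j) with hDdef
  have hD0 : 0 ≤ D := enorm_nonneg' _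
  have hX0 : 0 ≤ X := by
    have := enorm_nonneg' (rowAvg (Θ k)); rw [hXdef]; linarith
  have hτR : (1:ℝ) ≤ (τ:ℝ) := by exact_mod_cast hτ
  -- bound each telescoping term
  have hterm : ∀ s : ℕ, _root_.enorm (fun j => ε (r+s) * ((N:ℝ)⁻¹ * ∑ i, G (r+s) i j))
      ≤ ε (r+s) * (N:ℝ)⁻¹ * (B * (P (r+s) + N)) := by
    intro s
    have heq : (fun j => ε (r+s) * ((N:ℝ)⁻¹ * ∑ i, G (r+s) i j))
        = fun j => (ε (r+s) * (N:ℝ)⁻¹) * ∑ i, G (r+s) i j := by funext j; ring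
    rw [heq, enorm_smul',
      abs_of_nonneg (mul_nonneg (hεnonneg _) (by positivity : (0:ℝ) ≤ (N:ℝ)⁻¹))]
    have h1 : _root_.enorm (fun j => ∑ i, G (r+s) i j) ≤ ∑ i, _root_.enorm (fun j => G (r+s) i j) :=
      enorm_sum_le' _ _
    have h2 : ∑ i, _root_.enorm (fun j => G (r+s) i j) ≤ B * (P (r+s) + N) := by
      calc ∑ i, _root_.enorm (fun j => G (r+s) i j)
          ≤ ∑ i, B * (_root_.enorm (fun j => Θ (r+s) i j) + 1) :=
            Finset.sum_le_sum fun i _ => hG (r+s) i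
        _ = B * (P (r+s) + N) := by
            rw [← Finset.mul_sum, Finset.sum_add_distrib]; simp [hPdef]
    exact mul_le_mul_of_nonneg_left (h1.trans h2)
      (mul_nonneg (hεnonneg _) (by positivity : (0:ℝ) ≤ (N:ℝ)⁻¹))
  have hpowmono : ∀ s : ℕ, s ≤ τ → (1+a)^s ≤ (1+a)^τ :=
    fun s hs => pow_le_pow_right₀ (by linarith) hs
  have hp0 : (0:ℝ) ≤ (1+a)^τ := by positivity
  have hPrN : 0 ≤ P r + (N:ℝ) := by linarith [hPnn r, hNpos]
  -- main drift bound
  have hD1 : D ≤ (τ:ℝ) * (ε r * (N:ℝ)⁻¹ * (B * ((1+a)^τ * (P r + N)))) := by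
    have h0 : (fun j => rowAvg (Θ k) j - rowAvg (Θ r) j)
        = fun j => ∑ s ∈ Finset.range τ, ε (r+s) * ((N:ℝ)⁻¹ * ∑ i, G (r+s) i j) := by
      funext j; rw [← hkr]; exact htel τ j
    rw [hDdef, h0]
    calc _root_.enorm (fun j => ∑ s ∈ Finset.range τ, ε (r+s) * ((N:ℝ)⁻¹ * ∑ i, G (r+s) i j))
        ≤ ∑ s ∈ Finset.range τ,
            _root_.enorm (fun j => ε (r+s) * ((N:ℝ)⁻¹ * ∑ i, G (r+s) i j)) := enorm_sum_le' _ _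
      _ ≤ ∑ s ∈ Finset.range τ, ε r * (N:ℝ)⁻¹ * (B * ((1+a)^τ * (P r + N))) := by
          refine Finset.sum_le_sum fun s hs => ?_
          have hsτ : s ≤ τ := le_of_lt (Finset.mem_range.mp hs)
          refine (hterm s).trans ?_
          have hPs : P (r+s) + N ≤ (1+a)^τ * (P r + N) :=
            (hgrow s).trans (mul_le_mul_of_nonneg_right (hpowmono s hsτ) hPrN)
          have hε : ε (r+s) ≤ ε r := hεmono _ _ (Nat.le_add_right _ _)
          have hPsnn : 0 ≤ P (r+s) + (N:ℝ) := by linarith [hPnn (r+s), hNpos]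
          have e1 : ε (r+s) * (N:ℝ)⁻¹ ≤ ε r * (N:ℝ)⁻¹ :=
            mul_le_mul_of_nonneg_right hε (by positivity)
          have e2 : B * (P (r+s) + N) ≤ B * ((1+a)^τ * (P r + N)) :=
            mul_le_mul_of_nonneg_left hPs hB.le
          exact mul_le_mul e1 e2 (mul_nonneg hB.le hPsnn)
            (mul_nonneg (hεnonneg r) (by positivity : (0:ℝ) ≤ (N:ℝ)⁻¹))
      _ = (τ:ℝ) * (ε r * (N:ℝ)⁻¹ * (B * ((1+a)^τ * (P r + N)))) := by
          simp [Finset.sum_const, Finset.card_range]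
  -- bound P r
  have hPr : P r ≤ N * _root_.enorm (rowAvg (Θ r)) + N * S := by
    have hb : ∑ i, _root_.enorm (fun j => Θ r i j - rowAvg (Θ r) j) ≤ N * S := by
      have hbnn : 0 ≤ ∑ i, _root_.enorm (fun j => Θ r i j - rowAvg (Θ r) j) :=
        Finset.sum_nonneg fun i _ => enorm_nonneg' _
      have hcs : (∑ i, _root_.enorm (fun j => Θ r i j - rowAvg (Θ r) j))^2
          ≤ (N:ℝ) * consErr (Θ r) := by
        have := sq_sum_le_card_mul_sum_sq
          (s := Finset.univ) (f := fun i => _root_.enorm (fun j => Θ r i j - rowAvg (Θ r) j))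
        simpa [consErr, Finset.card_univ] using this
      have hcs2 : (∑ i, _root_.enorm (fun j => Θ r i j - rowAvg (Θ r) j))^2
          ≤ ((N:ℝ))^2 * consErr (Θ r) := by nlinarith
      have := Real.sqrt_le_sqrt hcs2
      rw [Real.sqrt_sq hbnn, Real.sqrt_mul (by positivity), Real.sqrt_sq hNpos.le] at this
      exact this
    have h1 : P r ≤ ∑ i, (_root_.enorm (rowAvg (Θ r))
        + _root_.enorm (fun j => Θ r i j - rowAvg (Θ r) j)) :=
      Finset.sum_le_sum fun i _ => enorm_triangle_sub _ _
    rw [Finset.sum_add_distrib, Finset.sum_const, Finset.card_univ] at h1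
    simp only [Fintype.card_fin, nsmul_eq_mul] at h1
    linarith
  have hbar : _root_.enorm (rowAvg (Θ r)) ≤ _root_.enorm (rowAvg (Θ k)) + D := by
    have := enorm_triangle_sub (rowAvg (Θ r)) (rowAvg (Θ k))
    rw [enorm_sub_comm] at this
    exact this
  have hXD : P r + (N:ℝ) ≤ N * (X + D) := by
    have h1 : (N:ℝ) * _root_.enorm (rowAvg (Θ r)) ≤ N * (_root_.enorm (rowAvg (Θ k)) + D) :=
      mul_le_mul_of_nonneg_left hbar hNpos.le
    rw [hXdef]; linarith
  -- numeric facts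
  have hc6 : 6 * (N:ℝ) * (a * τ) ≤ 1 := by
    have : 6 * (N:ℝ) * (a * τ) = 6 * N * B * τ * ε r := by rw [hadef]; ring
    linarith [this ▸ hstep]
  have hcnn : 0 ≤ a * (τ:ℝ) := mul_nonneg ha (by positivity)
  have hcτ : a * (τ:ℝ) ≤ 1/6 := by
    have h1 : a*(τ:ℝ)*1 ≤ a*(τ:ℝ)*N := mul_le_mul_of_nonneg_left hN1 hcnn
    have h2 : 6*(N:ℝ)*(a*τ) = 6*(a*(τ:ℝ)*N) := by ring
    linarith
  have hpow := pow_bound_aux a ha τ hcτ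
  have hpow' : (1+a)^τ ≤ 6/5 := by
    have h56 : (5/6:ℝ) ≤ 1 - a*τ := by linarith
    have h := mul_le_mul_of_nonneg_left h56 hp0
    linarith [hpow]
  have hDfin : D ≤ a * τ * (1+a)^τ * (X + D) := by
    have step : (τ:ℝ) * (ε r * (N:ℝ)⁻¹ * (B * ((1+a)^τ * (P r + N))))
        ≤ (τ:ℝ) * (ε r * (N:ℝ)⁻¹ * (B * ((1+a)^τ * ((N:ℝ) * (X + D))))) := by
      have := mul_le_mul_of_nonneg_left hXD hp0
      have h2 := mul_le_mul_of_nonneg_left this hB.le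
      have h3 := mul_le_mul_of_nonneg_left h2
        (mul_nonneg (hεnonneg r) (by positivity : (0:ℝ) ≤ (N:ℝ)⁻¹))
      have h4 := mul_le_mul_of_nonneg_left h3 (by positivity : (0:ℝ) ≤ (τ:ℝ))
      calc (τ:ℝ) * (ε r * (N:ℝ)⁻¹ * (B * ((1+a)^τ * (P r + N))))
          = (τ:ℝ) * (ε r * (N:ℝ)⁻¹ * (B * ((1+a)^τ * (P r + N)))) := rfl
        _ ≤ (τ:ℝ) * (ε r * (N:ℝ)⁻¹ * (B * ((1+a)^τ * ((N:ℝ) * (X + D))))) := h4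
    have hNinv : (N:ℝ)⁻¹ * (N:ℝ) = 1 := inv_mul_cancel₀ hNpos.ne'
    have heq : (τ:ℝ) * (ε r * (N:ℝ)⁻¹ * (B * ((1+a)^τ * ((N:ℝ) * (X + D)))))
        = a * τ * (1+a)^τ * (X + D) * ((N:ℝ)⁻¹ * (N:ℝ)) := by rw [hadef]; ring
    have := (hD1.trans step)
    rw [heq, hNinv, mul_one] at this
    exact this
  have hD2 : D ≤ (6/5) * (a*τ) * (X+D) := by
    refine hDfin.trans ?_
    have h1 : a*τ*(1+a)^τ ≤ a*τ*(6/5) := mul_le_mul_of_nonneg_left hpow' hcnn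
    have := mul_le_mul_of_nonneg_right h1 (by linarith : (0:ℝ) ≤ X + D)
    linarith [this]
  have hmain : D ≤ 3 * ε r * B * (τ:ℝ) * X := by
    have hcX : 0 ≤ a * τ * X := mul_nonneg hcnn hX0
    have h3 : 3 * ε r * B * (τ:ℝ) * X = 3 * (a*τ) * X := by rw [hadef]; ring
    rw [h3]
    exact boot_aux (a*τ) D X hD0 hX0 hcnn hcτ hD2
  refine ⟨hmain, ?_⟩
  have h32 : 3 * (a*τ) ≤ 1/(2*(N:ℝ)) := by
    rw [le_div_iff₀ (by positivity)]
    linarith [hc6]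
  calc D ≤ 3 * ε r * B * (τ:ℝ) * X := hmain
    _ = 3 * (a*τ) * X := by rw [hadef]; ring
    _ ≤ (1/(2*(N:ℝ))) * X := mul_le_mul_of_nonneg_right h32 hX0
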